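/- arXiv:0811.3383 — 3 statements merged into one kernel-verified Lean document; each statement's English description precedes it below -/
import Mathlib

section
/- Let Ω ⊂ ℝ^d be a hypercube partitioned into pairwise disjoint grid cells {E_j}_{j=1}^M, each a hypercube of edge length h > 0 (so L^d(E_j) = h^d). Let g : Ω → Ω be the piecewise translation g(x) = x + u(x)·Δt, where u is constant equal to u_j on each E_j and the CFL condition Δt·max_j ‖u_j‖ ≤ h holds (‖·‖ a fixed norm on ℝ^d). Then there exists a constant c > 0 depending only on the dimension d such that L^d(g⁻¹(E)) ≤ c·L^d(E) for every Borel set E ⊆ Ω. -/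
open MeasureTheory
open scoped ENNReal

/-- A (half-open) axis-aligned hypercube of edge length `h` in `ℝ^d`. -/
def IsCube {d : ℕ} (s : Set (EuclideanSpace ℝ (Fin d))) (h : ℝ) : Prop :=
  ∃ a : EuclideanSpace ℝ (Fin d), s = {x | ∀ i, a i ≤ x i ∧ x i < a i + h}

lemma euclid_coord_le_norm {d : ℕ} (v : EuclideanSpace ℝ (Fin d)) (i : Fin d) :
    |v i| ≤ ‖v‖ := by
  rw [EuclideanSpace.norm_eq]
  calc |v i| = Real.sqrt (‖v i‖ ^ 2) := by
        rw [Real.norm_eq_abs, Real.sqrt_sq (abs_nonneg _)]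
  _ ≤ _ := Real.sqrt_le_sqrt
      (Finset.single_le_sum (f := fun j => ‖v j‖ ^ 2) (fun j _ => sq_nonneg _)
        (Finset.mem_univ i))

lemma cube_eq_preimage {d : ℕ} (a : EuclideanSpace ℝ (Fin d)) (h : ℝ) :
    {x : EuclideanSpace ℝ (Fin d) | ∀ i, a i ≤ x i ∧ x i < a i + h}
      = (MeasurableEquiv.toLp 2 (Fin d → ℝ)).symm ⁻¹'
        (Set.univ.pi fun i => Set.Ico (a i) (a i + h)) := by
  ext x
  simp only [Set.mem_setOf_eq, Set.mem_preimage, Set.mem_pi, Set.mem_univ, true_implies,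
    Set.mem_Ico]
  rfl

lemma cube_measurable {d : ℕ} (a : EuclideanSpace ℝ (Fin d)) (h : ℝ) :
    MeasurableSet {x : EuclideanSpace ℝ (Fin d) | ∀ i, a i ≤ x i ∧ x i < a i + h} := by
  rw [cube_eq_preimage]
  exact (MeasurableEquiv.toLp 2 (Fin d → ℝ)).symm.measurable
    (MeasurableSet.univ_pi fun i => measurableSet_Ico)

lemma cube_volume {d : ℕ} (a : EuclideanSpace ℝ (Fin d)) (h : ℝ) :
    volume {x : EuclideanSpace ℝ (Fin d) | ∀ i, a i ≤ x i ∧ x i < a i + h}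
      = ENNReal.ofReal h ^ d := by
  rw [cube_eq_preimage, (EuclideanSpace.volume_preserving_symm_measurableEquiv_toLp (Fin d)).measure_preimage
    ((MeasurableSet.univ_pi fun i => measurableSet_Ico).nullMeasurableSet),
    volume_pi_pi]
  simp [Real.volume_Ico]

lemma closed_cube_volume {d : ℕ} (a : EuclideanSpace ℝ (Fin d)) (r : ℝ) :
    volume {y : EuclideanSpace ℝ (Fin d) | ∀ i, a i - r ≤ y i ∧ y i ≤ a i + r}
      = ENNReal.ofReal (2*r) ^ d := by
  have key : {y : EuclideanSpace ℝ (Fin d) | ∀ i, a i - r ≤ y i ∧ y i ≤ a i + r}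
      = (MeasurableEquiv.toLp 2 (Fin d → ℝ)).symm ⁻¹'
        (Set.univ.pi fun i => Set.Icc (a i - r) (a i + r)) := by
    ext x
    simp only [Set.mem_setOf_eq, Set.mem_preimage, Set.mem_pi, Set.mem_univ, true_implies,
      Set.mem_Icc]
    rfl
  rw [key, (EuclideanSpace.volume_preserving_symm_measurableEquiv_toLp (Fin d)).measure_preimage
    ((MeasurableSet.univ_pi fun i => measurableSet_Icc).nullMeasurableSet),
    volume_pi_pi]
  have h2 : ∀ i : Fin d, a i + r - (a i - r) = 2*r := by intro i; ring
  simp [Real.volume_Icc, h2]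

/-- For a piecewise translation `g x = x + Δt • u x` (with `u`
constant on each grid cell of a partition of the hypercube `Ω` into hypercubes of
edge `h`) satisfying the CFL condition `Δt·max_j ‖u j‖ ≤ h`, there is a constant
`c > 0` depending only on the dimension `d` with `L^d(g⁻¹(E)) ≤ c·L^d(E)` for all
Borel `E ⊆ Ω`. -/
theorem stmt_7 (d : ℕ) (hd : 0 < d) :
    ∃ c : ℝ, 0 < c ∧
      ∀ (M : ℕ) (Ω : Set (EuclideanSpace ℝ (Fin d))) (LΩ : ℝ), IsCube Ω LΩ →
      ∀ (E : Fin M → Set (EuclideanSpace ℝ (Fin d))) (h : ℝ), 0 < h →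
      (∀ j, IsCube (E j) h) → Pairwise (Function.onFun Disjoint E) → (⋃ j, E j) = Ω →
      ∀ (u : Fin M → EuclideanSpace ℝ (Fin d)) (Δt : ℝ), 0 < Δt →
      (∀ j, Δt * ‖u j‖ ≤ h) →
      ∀ g : EuclideanSpace ℝ (Fin d) → EuclideanSpace ℝ (Fin d),
        (∀ j, ∀ x ∈ E j, g x = x + Δt • u j) → (∀ x ∈ Ω, g x ∈ Ω) →
      ∀ F : Set (EuclideanSpace ℝ (Fin d)), MeasurableSet F → F ⊆ Ω →
        volume (Ω ∩ g ⁻¹' F) ≤ ENNReal.ofReal c * volume F := by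
  classical
  refine ⟨(4:ℝ)^d, by positivity, ?_⟩
  intro M Ω LΩ hΩ E h hh hE hdisj hunion u Δt hΔt hCFL g hg hgΩ F hF hFΩ
  choose a ha using hE
  set v : Fin M → EuclideanSpace ℝ (Fin d) := fun j => Δt • u j with hv
  have hvbound : ∀ j i, |v j i| ≤ h := by
    intro j i
    refine (euclid_coord_le_norm (v j) i).trans ?_
    have h2 : ‖v j‖ = Δt * ‖u j‖ := by
      rw [hv]; simp [norm_smul, abs_of_pos hΔt]
    rw [h2]; exact hCFL j
  -- the translated cubes
  set A : Fin M → Set (EuclideanSpace ℝ (Fin d)) :=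
    fun j => {x | ∀ i, a j i + v j i ≤ x i ∧ x i < a j i + v j i + h} with hA
  have hAmeas : ∀ j, MeasurableSet (A j) := fun j => cube_measurable (a j + v j) h
  have hEmeas : ∀ j, MeasurableSet (E j) := by
    intro j; rw [ha j]; exact cube_measurable (a j) h
  -- per-cell estimate
  have hcell : ∀ j, volume (E j ∩ g ⁻¹' F) ≤ volume (F ∩ A j) := by
    intro j
    have hsub : E j ∩ g ⁻¹' F ⊆ (fun x => x + v j) ⁻¹' (F ∩ A j) := by
      rintro x ⟨hxE, hxF⟩
      have hgx : g x = x + v j := hg j x hxE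
      have hxcube : ∀ i, a j i ≤ x i ∧ x i < a j i + h := by
        have := hxE; rw [ha j] at this; exact this
      refine ⟨?_, fun i => ?_⟩
      · show x + v j ∈ F
        rw [← hgx]; exact hxF
      · have h1 := hxcube i
        constructor
        · show a j i + v j i ≤ (x + v j) i
          have : (x + v j) i = x i + v j i := rfl
          rw [this]; linarith [h1.1]
        · show (x + v j) i < a j i + v j i + h
          have : (x + v j) i = x i + v j i := rfl
          rw [this]; linarith [h1.2]
    calc volume (E j ∩ g ⁻¹' F) ≤ volume ((fun x => x + v j) ⁻¹' (F ∩ A j)) :=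
          measure_mono hsub
    _ = volume (F ∩ A j) := measure_preimage_add_right volume (v j) _
  -- counting bound
  have hcount : ∀ x : EuclideanSpace ℝ (Fin d),
      ((Finset.univ.filter (fun j => x ∈ A j)).card : ℝ≥0∞) ≤ (4:ℝ≥0∞) ^ d := by
    intro x
    set S := Finset.univ.filter (fun j => x ∈ A j) with hS
    set B : Set (EuclideanSpace ℝ (Fin d)) :=
      {y | ∀ i, x i - 2*h ≤ y i ∧ y i ≤ x i + 2*h} with hB
    have hsub : ∀ j ∈ S, E j ⊆ B := by
      intro j hj y hy
      have hxA : x ∈ A j := (Finset.mem_filter.mp hj).2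
      have hycube : ∀ i, a j i ≤ y i ∧ y i < a j i + h := by
        have := hy; rw [ha j] at this; exact this
      intro i
      have h1 := hycube i
      have h2 := hxA i
      have h3 := abs_le.mp (hvbound j i)
      exact ⟨by linarith [h1.1, h2.2, h3.1, h3.2], by linarith [h1.2, h2.1, h3.1, h3.2]⟩
    have hvolB : volume B = ENNReal.ofReal (4*h) ^ d := by
      have := closed_cube_volume x (2*h)
      rw [hB]
      convert this using 3 <;> ring
    have hsum : (S.card : ℝ≥0∞) * ENNReal.ofReal h ^ d = volume (⋃ j ∈ S, E j) := by
      rw [measure_biUnion_finset (hdisj.set_pairwise _) (fun j _ => hEmeas j)]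
      have : ∀ j, volume (E j) = ENNReal.ofReal h ^ d := by
        intro j; rw [ha j]; exact cube_volume (a j) h
      simp [this, Finset.sum_const, nsmul_eq_mul]
    have hle : (S.card : ℝ≥0∞) * ENNReal.ofReal h ^ d ≤ (4:ℝ≥0∞)^d * ENNReal.ofReal h ^ d := by
      rw [hsum]
      calc volume (⋃ j ∈ S, E j) ≤ volume B :=
            measure_mono (Set.iUnion₂_subset hsub)
      _ = ENNReal.ofReal (4*h) ^ d := hvolB
      _ = (4:ℝ≥0∞)^d * ENNReal.ofReal h ^ d := by
            rw [ENNReal.ofReal_mul (by norm_num), mul_pow]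
            norm_num
    have hne0 : ENNReal.ofReal h ^ d ≠ 0 := by
      apply pow_ne_zero; simp [ENNReal.ofReal_eq_zero]; linarith
    have hnetop : ENNReal.ofReal h ^ d ≠ ⊤ := by
      apply ENNReal.pow_ne_top; exact ENNReal.ofReal_ne_top
    exact (ENNReal.mul_le_mul_iff_left hne0 hnetop).mp hle
  -- summing up
  have hcover : Ω ∩ g ⁻¹' F = ⋃ j, (E j ∩ g ⁻¹' F) := by
    rw [← hunion, Set.iUnion_inter]
  have hptwise : ∀ x, (∑ j, (F ∩ A j).indicator (1 : EuclideanSpace ℝ (Fin d) → ℝ≥0∞) x)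
      ≤ (4:ℝ≥0∞) ^ d * F.indicator (1 : EuclideanSpace ℝ (Fin d) → ℝ≥0∞) x := by
    intro x
    by_cases hxF : x ∈ F
    · have heach : ∀ j, (F ∩ A j).indicator (1 : EuclideanSpace ℝ (Fin d) → ℝ≥0∞) x
          = if x ∈ A j then 1 else 0 := by
        intro j
        simp [Set.indicator_apply, Set.mem_inter_iff, hxF]
      rw [Set.indicator_of_mem hxF]
      simp only [heach, Pi.one_apply, mul_one]
      calc (∑ j, if x ∈ A j then (1:ℝ≥0∞) else 0)
          = ((Finset.univ.filter fun j => x ∈ A j).card : ℝ≥0∞) := by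
            rw [Finset.sum_boole]
      _ ≤ _ := hcount x
    · have heach : ∀ j, (F ∩ A j).indicator (1 : EuclideanSpace ℝ (Fin d) → ℝ≥0∞) x = 0 := by
        intro j
        simp [Set.indicator_apply, Set.mem_inter_iff, hxF]
      simp [heach, Set.indicator_of_notMem hxF]
  calc volume (Ω ∩ g ⁻¹' F) = volume (⋃ j, (E j ∩ g ⁻¹' F)) := by rw [hcover]
  _ ≤ ∑ j, volume (E j ∩ g ⁻¹' F) := measure_iUnion_fintype_le _ _
  _ ≤ ∑ j, volume (F ∩ A j) := Finset.sum_le_sum fun j _ => hcell j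
  _ = ∑ j, ∫⁻ x, (F ∩ A j).indicator (1 : EuclideanSpace ℝ (Fin d) → ℝ≥0∞) x := by
      refine Finset.sum_congr rfl fun j _ => ?_
      rw [lintegral_indicator_one (hF.inter (hAmeas j))]
  _ = ∫⁻ x, ∑ j, (F ∩ A j).indicator (1 : EuclideanSpace ℝ (Fin d) → ℝ≥0∞) x := by
      rw [lintegral_finset_sum]
      exact fun j _ => measurable_one.indicator (hF.inter (hAmeas j))
  _ ≤ ∫⁻ x, (4:ℝ≥0∞) ^ d * F.indicator (1 : EuclideanSpace ℝ (Fin d) → ℝ≥0∞) x := lintegral_mono hptwise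
  _ = (4:ℝ≥0∞) ^ d * volume F := by
      rw [lintegral_const_mul _ (measurable_one.indicator hF), lintegral_indicator_one hF]
  _ = ENNReal.ofReal ((4:ℝ)^d) * volume F := by
      rw [ENNReal.ofReal_pow (by norm_num)]
      norm_num
end

section
/- Let Ω ⊂ ℝ² be a bounded Borel set with |x| ≤ C_Ω for all x ∈ Ω, let R > 0, β ≥ 0, let ω : [0,∞) → [0,∞) be nonincreasing, and let ρ ∈ L¹(Ω) with ρ ≥ 0 a.e. Define the interaction velocity ν(x) = β · ∫_Ω (y − x) χ_{B_R(x)}(y) ω(ρ(y)) dy, where B_R(x) is the closed Euclidean disk of radius R centered at x. Then ν is Lipschitz continuous on Ω: |ν(x₂) − ν(x₁)| ≤ β·ω(0)·R·(8C_Ω + πR)·|x₂ − x₁| for all x₁, x₂ ∈ Ω. -/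
open MeasureTheory

private lemma slab_bound (R d : ℝ) (hR : 0 < R) (hd : 0 ≤ d) :
    volume (Metric.closedBall (EuclideanSpace.single (1 : Fin 2) d) R \
      Metric.closedBall (0 : EuclideanSpace ℝ (Fin 2)) R) ≤ ENNReal.ofReal (2 * R * d) := by
  set U : Set (ℝ × ℝ) := {q : ℝ × ℝ | q.1 ∈ Set.Icc (-R) R ∧
      q.2 ∈ Set.Ioc (Real.sqrt (R ^ 2 - q.1 ^ 2)) (Real.sqrt (R ^ 2 - q.1 ^ 2) + d)} with hUdef
  have hcont : Continuous fun q : ℝ × ℝ => Real.sqrt (R ^ 2 - q.1 ^ 2) :=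
    Real.continuous_sqrt.comp (continuous_const.sub ((continuous_fst.pow 2)))
  have hU : MeasurableSet U := by
    have h1 : MeasurableSet {q : ℝ × ℝ | -R ≤ q.1} :=
      measurableSet_le measurable_const measurable_fst
    have h2 : MeasurableSet {q : ℝ × ℝ | q.1 ≤ R} :=
      measurableSet_le measurable_fst measurable_const
    have h3 : MeasurableSet {q : ℝ × ℝ | Real.sqrt (R ^ 2 - q.1 ^ 2) < q.2} :=
      measurableSet_lt hcont.measurable measurable_snd
    have h4 : MeasurableSet {q : ℝ × ℝ | q.2 ≤ Real.sqrt (R ^ 2 - q.1 ^ 2) + d} :=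
      measurableSet_le measurable_snd (hcont.measurable.add measurable_const)
    have : U = ({q : ℝ × ℝ | -R ≤ q.1} ∩ {q : ℝ × ℝ | q.1 ≤ R}) ∩
        ({q : ℝ × ℝ | Real.sqrt (R ^ 2 - q.1 ^ 2) < q.2} ∩
         {q : ℝ × ℝ | q.2 ≤ Real.sqrt (R ^ 2 - q.1 ^ 2) + d}) := by
      ext q; simp [hUdef, Set.mem_Icc, Set.mem_Ioc, and_assoc]
    rw [this]
    exact ((h1.inter h2).inter (h3.inter h4))
  -- volume of U
  have hvolU : volume U ≤ ENNReal.ofReal (2 * R * d) := by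
    rw [MeasureTheory.Measure.volume_eq_prod, MeasureTheory.Measure.prod_apply hU]
    have hle : ∀ x : ℝ, volume (Prod.mk x ⁻¹' U) ≤
        Set.indicator (Set.Icc (-R) R) (fun _ => ENNReal.ofReal d) x := by
      intro x
      by_cases hx : x ∈ Set.Icc (-R) R
      · have hpre : Prod.mk x ⁻¹' U =
            Set.Ioc (Real.sqrt (R ^ 2 - x ^ 2)) (Real.sqrt (R ^ 2 - x ^ 2) + d) := by
          ext y
          simp only [hUdef, Set.mem_preimage, Set.mem_setOf_eq, hx, true_and]
        rw [hpre, Real.volume_Ioc, Set.indicator_of_mem hx]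
        simp
      · have hpre : Prod.mk x ⁻¹' U = ∅ := by
          ext y
          simp only [hUdef, Set.mem_preimage, Set.mem_setOf_eq, Set.mem_empty_iff_false,
            iff_false, not_and]
          exact fun h => absurd h hx
        rw [hpre, Set.indicator_of_notMem hx]
        simp
    refine le_trans (MeasureTheory.lintegral_mono hle) ?_
    rw [MeasureTheory.lintegral_indicator measurableSet_Icc]
    rw [MeasureTheory.setLIntegral_const, Real.volume_Icc]
    rw [← ENNReal.ofReal_mul hd]
    have : d * (R - -R) = 2 * R * d := by ring
    rw [this]
  -- measure preserving map to ℝ × ℝ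
  have hmp : MeasurePreserving
      (fun p : EuclideanSpace ℝ (Fin 2) =>
        (MeasurableEquiv.finTwoArrow ((MeasurableEquiv.toLp 2 (Fin 2 → ℝ)).symm p) : ℝ × ℝ))
      volume volume :=
    (MeasureTheory.volume_preserving_finTwoArrow ℝ).comp
      (EuclideanSpace.volume_preserving_symm_measurableEquiv_toLp (Fin 2))
  set k : EuclideanSpace ℝ (Fin 2) → ℝ × ℝ :=
    fun p => (MeasurableEquiv.finTwoArrow ((MeasurableEquiv.toLp 2 (Fin 2 → ℝ)).symm p) : ℝ × ℝ)
  have hsub : (Metric.closedBall (EuclideanSpace.single (1 : Fin 2) d) R \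
      Metric.closedBall (0 : EuclideanSpace ℝ (Fin 2)) R) ⊆ k ⁻¹' U := by
    intro p hp
    obtain ⟨hp2, hp1⟩ := hp
    have hkp : k p = (p 0, p 1) := rfl
    rw [Metric.mem_closedBall, EuclideanSpace.dist_eq] at hp2
    rw [Metric.mem_closedBall, EuclideanSpace.dist_eq, not_le] at hp1
    rw [Fin.sum_univ_two] at hp2 hp1
    simp only [EuclideanSpace.single_apply, Real.dist_eq, sq_abs] at hp2 hp1
    norm_num at hp2 hp1
    -- hp2 : √((p 0)^2 + (p 1 - d)^2) ≤ R ; hp1 : R < √((p 0)^2 + (p 1)^2)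
    have h2 : (p 0) ^ 2 + (p 1 - d) ^ 2 ≤ R ^ 2 := by
      rw [← Real.sqrt_le_sqrt_iff (by positivity), Real.sqrt_sq hR.le]
      exact hp2
    have h1 : R ^ 2 < (p 0) ^ 2 + (p 1) ^ 2 := by
      have hs1 := Real.sq_sqrt (by positivity : (0:ℝ) ≤ (p 0) ^ 2 + (p 1) ^ 2)
      have hsn := Real.sqrt_nonneg ((p 0) ^ 2 + (p 1) ^ 2)
      nlinarith
    set a := Real.sqrt (R ^ 2 - (p 0) ^ 2) with ha
    have ha0 : 0 ≤ a := Real.sqrt_nonneg _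
    have ha2 : a ^ 2 = R ^ 2 - (p 0) ^ 2 := Real.sq_sqrt (by nlinarith)
    have hmem1 : p 0 ∈ Set.Icc (-R) R := Set.mem_Icc.mpr ⟨by nlinarith, by nlinarith⟩
    have hlt : a < p 1 := by
      by_contra hle
      push_neg at hle
      -- p 1 ≤ a; from h1, (p 1)^2 > a^2 so p 1 < -a
      have hneg : p 1 < -a := by nlinarith
      nlinarith
    have hle2 : p 1 ≤ a + d := by nlinarith
    refine Set.mem_preimage.mpr ?_
    rw [hkp]
    exact ⟨hmem1, Set.mem_Ioc.mpr ⟨hlt, hle2⟩⟩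
  calc volume (Metric.closedBall (EuclideanSpace.single (1 : Fin 2) d) R \
      Metric.closedBall (0 : EuclideanSpace ℝ (Fin 2)) R)
      ≤ volume (k ⁻¹' U) := measure_mono hsub
    _ = volume U := hmp.measure_preimage hU.nullMeasurableSet
    _ ≤ ENNReal.ofReal (2 * R * d) := hvolU

private lemma one_side_bound (R : ℝ) (hR : 0 < R) (x₁ x₂ : EuclideanSpace ℝ (Fin 2)) :
    volume (Metric.closedBall x₂ R \ Metric.closedBall x₁ R) ≤
      ENNReal.ofReal (2 * R * ‖x₂ - x₁‖) := by
  set v := x₂ - x₁ with hv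
  -- translation
  have htrans : (fun y => x₁ + y) ⁻¹' (Metric.closedBall x₂ R \ Metric.closedBall x₁ R) =
      Metric.closedBall v R \ Metric.closedBall 0 R := by
    ext y
    have e1 : x₁ + y - x₂ = y - v := by rw [hv]; abel
    have e2 : x₁ + y - x₁ = y - 0 := by abel
    simp only [Set.mem_preimage, Set.mem_diff, Metric.mem_closedBall, dist_eq_norm, e1, e2]
  have hT : volume (Metric.closedBall x₂ R \ Metric.closedBall x₁ R) =
      volume (Metric.closedBall v R \ Metric.closedBall 0 R) := by
    rw [← htrans, measure_preimage_add]
  rw [hT]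
  by_cases hv0 : v = 0
  · rw [hv0]
    simp
  -- rotation
  have hnv : ‖v‖ ≠ 0 := norm_ne_zero_iff.mpr hv0
  set u : EuclideanSpace ℝ (Fin 2) := ‖v‖⁻¹ • v with hu
  have hun : ‖u‖ = 1 := by
    rw [hu, norm_smul, norm_inv, norm_norm, inv_mul_cancel₀ hnv]
  haveI : Subsingleton (({1} : Set (Fin 2)) : Type) :=
    (Set.subsingleton_coe _).2 Set.subsingleton_singleton
  have hon : Orthonormal ℝ (Set.restrict ({1} : Set (Fin 2)) (fun _ : Fin 2 => u)) := by
    constructor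
    · intro i; exact hun
    · intro i j hij; exact absurd (Subsingleton.elim i j) hij
  obtain ⟨b, hb⟩ := hon.exists_orthonormalBasis_extension_of_card_eq (by simp)
  have hb1 : b 1 = u := hb 1 rfl
  set f := b.repr with hf
  have hfv : f v = EuclideanSpace.single (1 : Fin 2) ‖v‖ := by
    have hvu : v = ‖v‖ • u := by rw [hu, smul_inv_smul₀ hnv]
    have hstep : f v = ‖v‖ • f u := by
      rw [← LinearIsometryEquiv.map_smul, ← hvu]
    rw [hstep, ← hb1, OrthonormalBasis.repr_self]
    ext i
    simp [EuclideanSpace.single_apply, PiLp.smul_apply, mul_ite, mul_one, mul_zero]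
  have hpre : f ⁻¹' (Metric.closedBall (EuclideanSpace.single (1 : Fin 2) ‖v‖) R \
      Metric.closedBall 0 R) = Metric.closedBall v R \ Metric.closedBall 0 R := by
    rw [← hfv]
    ext y
    have h0 : dist (f y) 0 = dist y 0 := by
      calc dist (f y) 0 = dist (f y) (f 0) := by rw [map_zero]
        _ = dist y 0 := f.dist_map y 0
    simp only [Set.mem_preimage, Set.mem_diff, Metric.mem_closedBall, f.dist_map, h0]
  rw [← hpre, (b.measurePreserving_repr).measure_preimage
    ((measurableSet_closedBall.diff measurableSet_closedBall).nullMeasurableSet)]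
  exact slab_bound R ‖v‖ hR (norm_nonneg v)

/-- The nonlocal interaction velocity
`ν(x) = β ∫_Ω (y − x) χ_{B_R(x)}(y) ω(ρ(y)) dy` (with `Ω ⊂ ℝ²` bounded by `C_Ω`,
`ω : [0,∞) → [0,∞)` nonincreasing, `ρ ≥ 0` a.e. integrable) is Lipschitz on `Ω`
with constant `β·ω(0)·R·(8C_Ω + πR)`. -/
theorem stmt_17 (Ω : Set (EuclideanSpace ℝ (Fin 2))) (hΩ : MeasurableSet Ω)
    (CΩ : ℝ) (hCΩ : ∀ x ∈ Ω, ‖x‖ ≤ CΩ)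
    (R β : ℝ) (hR : 0 < R) (hβ : 0 ≤ β)
    (ω : ℝ → ℝ)
    (hωmono : ∀ s t : ℝ, 0 ≤ s → s ≤ t → ω t ≤ ω s)
    (hωpos : ∀ s : ℝ, 0 ≤ s → 0 ≤ ω s)
    (ρ : EuclideanSpace ℝ (Fin 2) → ℝ)
    (hρint : IntegrableOn ρ Ω) (hρpos : 0 ≤ᵐ[volume.restrict Ω] ρ)
    (ν : EuclideanSpace ℝ (Fin 2) → EuclideanSpace ℝ (Fin 2))
    (hν : ∀ x, ν x = β • ∫ y in Ω,
      Set.indicator (Metric.closedBall x R) (fun z => ω (ρ z)) y • (y - x)) :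
    ∀ x₁ ∈ Ω, ∀ x₂ ∈ Ω,
      ‖ν x₂ - ν x₁‖ ≤ β * ω 0 * R * (8 * CΩ + Real.pi * R) * ‖x₂ - x₁‖ := by
  intro x₁ hx₁ x₂ hx₂
  set d := ‖x₂ - x₁‖ with hd
  have hd0 : 0 ≤ d := norm_nonneg _
  have hK : 0 ≤ ω 0 := hωpos 0 le_rfl
  have hC0 : 0 ≤ CΩ := le_trans (norm_nonneg x₁) (hCΩ x₁ hx₁)
  -- Ω has finite measure
  have hΩsub : Ω ⊆ Metric.closedBall 0 CΩ := fun x hx => by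
    simpa [Metric.mem_closedBall, dist_zero_right] using hCΩ x hx
  have hΩfin : volume Ω < ⊤ :=
    lt_of_le_of_lt (measure_mono hΩsub) measure_closedBall_lt_top
  haveI : IsFiniteMeasure (volume.restrict Ω) :=
    ⟨by rwa [Measure.restrict_apply_univ]⟩
  -- measurability of ω ∘ ρ
  have hρm : AEMeasurable ρ (volume.restrict Ω) := hρint.aemeasurable
  have hanti : Antitone (fun t : ℝ => ω (max 0 t)) := fun s t hst =>
    hωmono _ _ (le_max_left _ _) (max_le_max le_rfl hst)
  have hωρ : AEMeasurable (fun y => ω (ρ y)) (volume.restrict Ω) := by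
    refine (hanti.measurable.comp_aemeasurable hρm).congr ?_
    filter_upwards [hρpos] with y hy
    simp only [Pi.zero_apply] at hy
    simp [max_eq_right hy]
  -- the integrand
  set F : EuclideanSpace ℝ (Fin 2) → EuclideanSpace ℝ (Fin 2) → EuclideanSpace ℝ (Fin 2) :=
    fun x y => Set.indicator (Metric.closedBall x R) (fun z => ω (ρ z)) y • (y - x) with hF
  have hFmeas : ∀ x, AEStronglyMeasurable (F x) (volume.restrict Ω) := fun x =>
    ((hωρ.indicator measurableSet_closedBall).aestronglyMeasurable).smul
      ((continuous_id.sub continuous_const).aestronglyMeasurable)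
  have hae : ∀ᵐ y ∂(volume.restrict Ω), y ∈ Ω ∧ 0 ≤ ρ y := by
    filter_upwards [ae_restrict_mem hΩ, hρpos] with y h1 h2
    exact ⟨h1, h2⟩
  have hind : ∀ x, ∀ y, 0 ≤ ρ y →
      |Set.indicator (Metric.closedBall x R) (fun z => ω (ρ z)) y| ≤ ω 0 := by
    intro x y hy
    by_cases hmem : y ∈ Metric.closedBall x R
    · rw [Set.indicator_of_mem hmem, abs_of_nonneg (hωpos _ hy)]
      exact hωmono 0 (ρ y) le_rfl hy
    · rw [Set.indicator_of_notMem hmem]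
      simpa using hK
  have hFint : ∀ x ∈ Ω, Integrable (F x) (volume.restrict Ω) := by
    intro x hx
    refine (integrable_const (ω 0 * (2 * CΩ))).mono' (hFmeas x) ?_
    filter_upwards [hae] with y ⟨hyΩ, hyρ⟩
    rw [hF]
    simp only [norm_smul, Real.norm_eq_abs]
    have h1 : ‖y - x‖ ≤ 2 * CΩ := by
      calc ‖y - x‖ ≤ ‖y‖ + ‖x‖ := norm_sub_le y x
        _ ≤ CΩ + CΩ := add_le_add (hCΩ y hyΩ) (hCΩ x hx)
        _ = 2 * CΩ := by ring
    exact mul_le_mul (hind x y hyρ) h1 (norm_nonneg _) hK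
  -- symmetric difference set
  set A : Set (EuclideanSpace ℝ (Fin 2)) :=
    (Metric.closedBall x₂ R \ Metric.closedBall x₁ R) ∪
    (Metric.closedBall x₁ R \ Metric.closedBall x₂ R) with hA
  have hAmeas : MeasurableSet A :=
    (measurableSet_closedBall.diff measurableSet_closedBall).union
      (measurableSet_closedBall.diff measurableSet_closedBall)
  set G : EuclideanSpace ℝ (Fin 2) → ℝ := fun y =>
    Set.indicator A (fun _ => ω 0 * (2 * CΩ)) y +
    Set.indicator (Metric.closedBall x₁ R) (fun _ => ω 0 * d) y with hG
  have hGint : Integrable G (volume.restrict Ω) :=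
    ((integrable_const _).indicator hAmeas).add
      ((integrable_const _).indicator measurableSet_closedBall)
  -- pointwise bound
  have hptwise : ∀ᵐ y ∂(volume.restrict Ω), ‖F x₂ y - F x₁ y‖ ≤ G y := by
    filter_upwards [hae] with y ⟨hyΩ, hyρ⟩
    set i₁ := Set.indicator (Metric.closedBall x₁ R) (fun z => ω (ρ z)) y with hi₁
    set i₂ := Set.indicator (Metric.closedBall x₂ R) (fun z => ω (ρ z)) y with hi₂
    have hsplit : F x₂ y - F x₁ y = (i₂ - i₁) • (y - x₂) + i₁ • (x₁ - x₂) := by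
      rw [hF]
      simp only [← hi₁, ← hi₂, sub_smul, smul_sub]
      abel
    have hy2 : ‖y - x₂‖ ≤ 2 * CΩ := by
      calc ‖y - x₂‖ ≤ ‖y‖ + ‖x₂‖ := norm_sub_le y x₂
        _ ≤ CΩ + CΩ := add_le_add (hCΩ y hyΩ) (hCΩ x₂ hx₂)
        _ = 2 * CΩ := by ring
    have hωy0 : 0 ≤ ω (ρ y) := hωpos _ hyρ
    have hωyK : ω (ρ y) ≤ ω 0 := hωmono 0 (ρ y) le_rfl hyρ
    have hterm1 : ‖(i₂ - i₁) • (y - x₂)‖ ≤ Set.indicator A (fun _ => ω 0 * (2 * CΩ)) y := by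
      rw [norm_smul, Real.norm_eq_abs]
      by_cases h2 : y ∈ Metric.closedBall x₂ R <;> by_cases h1 : y ∈ Metric.closedBall x₁ R
      · have : i₂ - i₁ = 0 := by rw [hi₁, hi₂, Set.indicator_of_mem h1, Set.indicator_of_mem h2, sub_self]
        rw [this, abs_zero, zero_mul]
        exact Set.indicator_nonneg (fun _ _ => by positivity) y
      · have hmemA : y ∈ A := Or.inl ⟨h2, h1⟩
        rw [Set.indicator_of_mem hmemA]
        have : i₂ - i₁ = ω (ρ y) := by
          rw [hi₁, hi₂, Set.indicator_of_mem h2, Set.indicator_of_notMem h1, sub_zero]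
        rw [this, abs_of_nonneg hωy0]
        exact mul_le_mul hωyK hy2 (norm_nonneg _) hK
      · have hmemA : y ∈ A := Or.inr ⟨h1, h2⟩
        rw [Set.indicator_of_mem hmemA]
        have : i₂ - i₁ = -ω (ρ y) := by
          rw [hi₁, hi₂, Set.indicator_of_mem h1, Set.indicator_of_notMem h2, zero_sub]
        rw [this, abs_neg, abs_of_nonneg hωy0]
        exact mul_le_mul hωyK hy2 (norm_nonneg _) hK
      · have : i₂ - i₁ = 0 := by
          rw [hi₁, hi₂, Set.indicator_of_notMem h1, Set.indicator_of_notMem h2, sub_self]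
        rw [this, abs_zero, zero_mul]
        exact Set.indicator_nonneg (fun _ _ => by positivity) y
    have hterm2 : ‖i₁ • (x₁ - x₂)‖ ≤
        Set.indicator (Metric.closedBall x₁ R) (fun _ => ω 0 * d) y := by
      rw [norm_smul, Real.norm_eq_abs]
      by_cases h1 : y ∈ Metric.closedBall x₁ R
      · rw [Set.indicator_of_mem h1, hi₁, Set.indicator_of_mem h1, abs_of_nonneg hωy0]
        have : ‖x₁ - x₂‖ = d := by rw [hd, norm_sub_rev]
        rw [this]
        exact mul_le_mul_of_nonneg_right hωyK hd0
      · rw [Set.indicator_of_notMem h1, hi₁, Set.indicator_of_notMem h1, abs_zero, zero_mul]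
    calc ‖F x₂ y - F x₁ y‖ = ‖(i₂ - i₁) • (y - x₂) + i₁ • (x₁ - x₂)‖ := by rw [hsplit]
      _ ≤ ‖(i₂ - i₁) • (y - x₂)‖ + ‖i₁ • (x₁ - x₂)‖ := norm_add_le _ _
      _ ≤ G y := add_le_add hterm1 hterm2
  -- measure bounds
  have hm1 : (volume.restrict Ω A).toReal ≤ 4 * R * d := by
    have h1 : volume.restrict Ω A ≤ volume A := Measure.restrict_le_self A
    have h2 : volume A ≤ ENNReal.ofReal (2 * R * d) + ENNReal.ofReal (2 * R * d) := by
      refine le_trans (measure_union_le _ _) (add_le_add ?_ ?_)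
      · exact one_side_bound R hR x₁ x₂
      · have := one_side_bound R hR x₂ x₁
        rwa [norm_sub_rev] at this
    have h3 : volume.restrict Ω A ≤ ENNReal.ofReal (4 * R * d) := by
      refine le_trans h1 (le_trans h2 ?_)
      rw [← ENNReal.ofReal_add (by positivity) (by positivity)]
      exact ENNReal.ofReal_le_ofReal (by linarith)
    calc (volume.restrict Ω A).toReal ≤ (ENNReal.ofReal (4 * R * d)).toReal :=
          ENNReal.toReal_mono ENNReal.ofReal_ne_top h3
      _ = 4 * R * d := ENNReal.toReal_ofReal (by positivity)
  have hm2 : (volume.restrict Ω (Metric.closedBall x₁ R)).toReal ≤ Real.pi * R ^ 2 := by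
    have h1 : volume.restrict Ω (Metric.closedBall x₁ R) ≤ volume (Metric.closedBall x₁ R) :=
      Measure.restrict_le_self _
    have h2 : volume (Metric.closedBall x₁ R) = ENNReal.ofReal (Real.pi * R ^ 2) := by
      rw [EuclideanSpace.volume_closedBall]
      simp only [Fintype.card_fin]
      rw [show ((2 : ℕ) : ℝ) / 2 + 1 = 2 by norm_num, Real.Gamma_two,
        ← ENNReal.ofReal_pow hR.le]
      rw [← ENNReal.ofReal_mul (by positivity)]
      congr 1
      rw [Real.sq_sqrt Real.pi_nonneg]
      ring
    calc (volume.restrict Ω (Metric.closedBall x₁ R)).toReal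
        ≤ (volume (Metric.closedBall x₁ R)).toReal :=
          ENNReal.toReal_mono (by rw [h2]; exact ENNReal.ofReal_ne_top) h1
      _ = Real.pi * R ^ 2 := by rw [h2, ENNReal.toReal_ofReal (by positivity)]
  -- final assembly
  have hν' : ∀ x, ν x = β • ∫ y in Ω, F x y := fun x => hν x
  have hInt2 := hFint x₂ hx₂
  have hInt1 := hFint x₁ hx₁
  have hintA : Integrable (fun y => Set.indicator A (fun _ => ω 0 * (2 * CΩ)) y)
      (volume.restrict Ω) := (integrable_const _).indicator hAmeas
  have hintB : Integrable
      (fun y => Set.indicator (Metric.closedBall x₁ R) (fun _ => ω 0 * d) y)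
      (volume.restrict Ω) := (integrable_const _).indicator measurableSet_closedBall
  have hGval : ∫ y in Ω, G y =
      (volume.restrict Ω A).toReal * (ω 0 * (2 * CΩ)) +
      (volume.restrict Ω (Metric.closedBall x₁ R)).toReal * (ω 0 * d) := by
    rw [hG]
    rw [integral_add hintA hintB, integral_indicator_const _ hAmeas,
      integral_indicator_const _ measurableSet_closedBall, smul_eq_mul, smul_eq_mul]
    rfl
  have hmain : ‖ν x₂ - ν x₁‖ ≤ β * ∫ y in Ω, G y := by
    calc ‖ν x₂ - ν x₁‖ = β * ‖(∫ y in Ω, F x₂ y) - ∫ y in Ω, F x₁ y‖ := by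
          rw [hν' x₁, hν' x₂, ← smul_sub, norm_smul, Real.norm_of_nonneg hβ]
      _ = β * ‖∫ y in Ω, (F x₂ y - F x₁ y)‖ := by rw [integral_sub hInt2 hInt1]
      _ ≤ β * ∫ y in Ω, ‖F x₂ y - F x₁ y‖ :=
          mul_le_mul_of_nonneg_left (norm_integral_le_integral_norm _) hβ
      _ ≤ β * ∫ y in Ω, G y :=
          mul_le_mul_of_nonneg_left
            (integral_mono_ae ((hInt2.sub hInt1).norm) hGint hptwise) hβ
  refine le_trans hmain ?_
  rw [hGval]
  have e1 : (volume.restrict Ω A).toReal * (ω 0 * (2 * CΩ)) ≤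
      (4 * R * d) * (ω 0 * (2 * CΩ)) :=
    mul_le_mul_of_nonneg_right hm1 (by positivity)
  have e2 : (volume.restrict Ω (Metric.closedBall x₁ R)).toReal * (ω 0 * d) ≤
      (Real.pi * R ^ 2) * (ω 0 * d) :=
    mul_le_mul_of_nonneg_right hm2 (by positivity)
  calc β * ((volume.restrict Ω A).toReal * (ω 0 * (2 * CΩ)) +
        (volume.restrict Ω (Metric.closedBall x₁ R)).toReal * (ω 0 * d))
      ≤ β * ((4 * R * d) * (ω 0 * (2 * CΩ)) + (Real.pi * R ^ 2) * (ω 0 * d)) :=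
        mul_le_mul_of_nonneg_left (add_le_add e1 e2) hβ
    _ = β * ω 0 * R * (8 * CΩ + Real.pi * R) * d := by ring
end

section
/- Let Ω ⊂ ℝ² be a bounded Borel set, let R > 0, α, β ≥ 0, x₀ ∈ ℝ², Δt > 0, and let ω : [0,∞) → [0,∞) be nonincreasing (hence bounded by ω(0)). Let μ_0 be a positive measure on Ω absolutely continuous with respect to L², with density ρ_0 ∈ L¹(Ω) ∩ L^∞(Ω), ρ_0 ≥ 0 a.e. Define recursively, whenever μ_n has a nonnegative density ρ_n, the velocity v_n(x) = α(x₀ − x) + β·∫_Ω (y − x) χ_{B_R(x)}(y) ω(ρ_n(y)) dy, the motion mapping γ_n(x) = x + v_n(x)Δt (assumed to map Ω into Ω, with Δt small enough that the Lipschitz constant of v_n times Δt is less than 1), and μ_{n+1} = (γ_n)_#μ_n. Then: (i) μ_n ≪ L² for all n > 0; (ii) there exists a unique sequence {ρ_n}_{n>0} ⊂ L¹(Ω) ∩ L^∞(Ω), ρ_n ≥ 0 a.e. in Ω, such that dμ_n = ρ_n dx for each n > 0 and ∫_Ω η ρ_{n+1} dx = ∫_Ω (η∘γ_n) ρ_n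 dx for all bounded Borel η and all n ≥ 0. -/
open MeasureTheory
open scoped ENNReal NNReal

set_option maxHeartbeats 1000000

local notation "E2" => EuclideanSpace ℝ (Fin 2)

/-- The pedestrian model velocity: desired velocity `α(x₀ − x)` toward the target
`x₀` plus the nonlocal interaction velocity
`β ∫_Ω (y − x) χ_{B_R(x)}(y) ω(ρ(y)) dy`. -/
noncomputable def pedVel (Ω : Set (EuclideanSpace ℝ (Fin 2))) (R α β : ℝ)
    (x₀ : EuclideanSpace ℝ (Fin 2)) (ω : ℝ → ℝ)
    (ρ : EuclideanSpace ℝ (Fin 2) → ℝ) (x : EuclideanSpace ℝ (Fin 2)) :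
    EuclideanSpace ℝ (Fin 2) :=
  α • (x₀ - x) + β • ∫ y in Ω,
    Set.indicator (Metric.closedBall x R) (fun z => ω (ρ z)) y • (y - x)

/-- Volume of the image of a subset under a Lipschitz-on-a-set map is controlled
by a constant (depending only on the Lipschitz constant) times the volume. -/
theorem aux_lip_image {L : ℝ≥0} {f : E2 → E2} {s : Set E2}
    (hf : LipschitzOnWith L f s) :
    ∃ C : ℝ≥0∞, C ≠ ⊤ ∧ ∀ t, t ⊆ s → volume (f '' t) ≤ C * volume t := by
  classical
  set e := (MeasurableEquiv.toLp 2 (Fin 2 → ℝ)).symm with he_def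
  have hvolmap : ∀ A : Set E2, (volume : Measure (Fin 2 → ℝ)) (⇑e '' A) = volume A := by
    intro A
    have h1 : (volume : Measure E2).map e = volume :=
      (EuclideanSpace.volume_preserving_symm_measurableEquiv_toLp (Fin 2)).map_eq
    calc (volume : Measure (Fin 2 → ℝ)) (⇑e '' A)
        = ((volume : Measure E2).map e) (⇑e '' A) := by rw [h1]
      _ = volume (⇑e ⁻¹' (⇑e '' A)) := e.map_apply _
      _ = volume A := by rw [Set.preimage_image_eq A e.injective]
  have hePi : (μH[(2:ℝ)] : Measure (Fin 2 → ℝ)) = volume := by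
    have := MeasureTheory.hausdorffMeasure_pi_real (ι := Fin 2)
    simpa using this
  have he1 : LipschitzWith 1 ⇑e := by
    rw [he_def]
    exact PiLp.lipschitzWith_ofLp 2 _
  obtain ⟨K₂, hsymm⟩ : ∃ K₂ : ℝ≥0, LipschitzWith K₂ ⇑e.symm := by
    refine ⟨(Fintype.card (Fin 2) : ℝ≥0) ^ (1 / (2:ℝ≥0∞)).toReal, ?_⟩
    rw [he_def]
    exact PiLp.lipschitzWith_toLp 2 _
  refine ⟨((1 * (L * K₂) : ℝ≥0) : ℝ≥0∞) ^ (2:ℝ), ?_, ?_⟩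
  · exact ENNReal.rpow_ne_top_of_nonneg (by norm_num) ENNReal.coe_ne_top
  · intro t ht
    have hmaps : Set.MapsTo ⇑e.symm (⇑e '' t) t := by
      rintro u ⟨a, ha, rfl⟩
      simpa using ha
    have hcomp : LipschitzOnWith (1 * (L * K₂)) (⇑e ∘ (f ∘ ⇑e.symm)) (⇑e '' t) :=
      (he1.lipschitzOnWith).comp
        ((hf.mono ht).comp hsymm.lipschitzOnWith hmaps) (Set.mapsTo_univ _ _)
    have him : (⇑e ∘ (f ∘ ⇑e.symm)) '' (⇑e '' t) = ⇑e '' (f '' t) := by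
      rw [← Set.image_comp]
      have : (⇑e ∘ (f ∘ ⇑e.symm)) ∘ ⇑e = ⇑e ∘ f := by
        funext x; simp
      rw [this, Set.image_comp]
    calc volume (f '' t) = (volume : Measure (Fin 2 → ℝ)) (⇑e '' (f '' t)) :=
          (hvolmap _).symm
      _ = μH[(2:ℝ)] (⇑e '' (f '' t)) := by rw [hePi]
      _ = μH[(2:ℝ)] ((⇑e ∘ (f ∘ ⇑e.symm)) '' (⇑e '' t)) := by rw [him]
      _ ≤ ((1 * (L * K₂) : ℝ≥0) : ℝ≥0∞) ^ (2:ℝ) * μH[(2:ℝ)] (⇑e '' t) :=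
          hcomp.hausdorffMeasure_image_le (by norm_num)
      _ = ((1 * (L * K₂) : ℝ≥0) : ℝ≥0∞) ^ (2:ℝ) * volume t := by
          rw [hePi, hvolmap]

/-- The pedestrian velocity field is a measurable function. -/
theorem pedVel_measurable {Ω : Set E2} (R α β : ℝ) (x₀ : E2) {ω : ℝ → ℝ}
    (hωmono : ∀ s t : ℝ, 0 ≤ s → s ≤ t → ω t ≤ ω s)
    {σ : E2 → ℝ} (hσm : AEStronglyMeasurable σ (volume.restrict Ω))
    (hσpos : 0 ≤ᵐ[volume.restrict Ω] σ) :
    Measurable (pedVel Ω R α β x₀ ω σ) := by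
  have hωm : Measurable fun t : ℝ => ω (max t 0) := by
    have hanti : Antitone fun t : ℝ => ω (max t 0) := fun a b hab =>
      hωmono (max a 0) (max b 0) (le_max_right _ _) (max_le_max hab le_rfl)
    exact hanti.measurable
  set g : E2 → ℝ := fun y => ω (max (hσm.mk σ y) 0) with hg_def
  have hgm : Measurable g := hωm.comp hσm.measurable_mk
  have hgae : ∀ᵐ y ∂(volume.restrict Ω), g y = ω (σ y) := by
    filter_upwards [hσm.ae_eq_mk, hσpos] with y h1 h2
    rw [hg_def]
    simp only
    have h2' : (0:ℝ) ≤ σ y := h2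
    rw [← h1, max_eq_left h2']
  set F : E2 × E2 → E2 :=
    Set.indicator {q : E2 × E2 | dist q.2 q.1 ≤ R} (fun q => g q.2 • (q.2 - q.1)) with hF_def
  have hFm : StronglyMeasurable F := by
    have hset : MeasurableSet {q : E2 × E2 | dist q.2 q.1 ≤ R} :=
      (isClosed_le (continuous_snd.dist continuous_fst) continuous_const).measurableSet
    exact (((hgm.comp measurable_snd).smul
      (measurable_snd.sub measurable_fst)).indicator hset).stronglyMeasurable
  have key : pedVel Ω R α β x₀ ω σ = fun x =>
      α • (x₀ - x) + β • ∫ y in Ω, F (x, y) := by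
    funext x
    unfold pedVel
    congr 1
    congr 1
    apply integral_congr_ae
    filter_upwards [hgae] with y hy
    by_cases hcond : dist y x ≤ R
    · rw [hF_def, Set.indicator_of_mem (show (x, y) ∈ {q : E2 × E2 | dist q.2 q.1 ≤ R} from hcond),
        Set.indicator_of_mem (Metric.mem_closedBall.mpr hcond), hy]
    · rw [hF_def,
        Set.indicator_of_notMem (show (x, y) ∉ {q : E2 × E2 | dist q.2 q.1 ≤ R} from hcond),
        Set.indicator_of_notMem (fun h => hcond (Metric.mem_closedBall.mp h)), zero_smul]
  rw [key]
  have hint : StronglyMeasurable fun x => ∫ y, F (x, y) ∂(volume.restrict Ω) :=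
    hFm.integral_prod_right'
  exact ((measurable_const.sub measurable_id).const_smul α).add
    (hint.measurable.const_smul β)

/-- The pedestrian velocity only depends on the density up to a.e. equivalence. -/
theorem pedVel_congr {Ω : Set E2} (R α β : ℝ) (x₀ : E2) (ω : ℝ → ℝ)
    {σ σ' : E2 → ℝ} (h : σ =ᵐ[volume.restrict Ω] σ') :
    pedVel Ω R α β x₀ ω σ = pedVel Ω R α β x₀ ω σ' := by
  funext x
  unfold pedVel
  congr 1
  congr 1
  apply integral_congr_ae
  filter_upwards [h] with y hy
  by_cases hcond : y ∈ Metric.closedBall x R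
  · rw [Set.indicator_of_mem hcond, Set.indicator_of_mem hcond, hy]
  · rw [Set.indicator_of_notMem hcond, Set.indicator_of_notMem hcond]

/-- The motion mapping. -/
noncomputable def pedMap (Ω : Set (EuclideanSpace ℝ (Fin 2))) (R α β : ℝ)
    (x₀ : EuclideanSpace ℝ (Fin 2)) (Δt : ℝ) (ω : ℝ → ℝ)
    (σ : EuclideanSpace ℝ (Fin 2) → ℝ) : EuclideanSpace ℝ (Fin 2) → EuclideanSpace ℝ (Fin 2) :=
  fun x => x + Δt • pedVel Ω R α β x₀ ω σ x

/-- The measure with density `σ` on `Ω`. -/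
noncomputable def pedDen (Ω : Set (EuclideanSpace ℝ (Fin 2)))
    (σ : EuclideanSpace ℝ (Fin 2) → ℝ) : Measure (EuclideanSpace ℝ (Fin 2)) :=
  (volume.restrict Ω).withDensity fun x => ENNReal.ofReal (σ x)

/-- The next density in the recursively defined sequence. -/
noncomputable def pedNext (Ω : Set (EuclideanSpace ℝ (Fin 2))) (R α β : ℝ)
    (x₀ : EuclideanSpace ℝ (Fin 2)) (Δt : ℝ) (ω : ℝ → ℝ)
    (σ : EuclideanSpace ℝ (Fin 2) → ℝ) : EuclideanSpace ℝ (Fin 2) → ℝ :=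
  fun x => (((pedDen Ω σ).map (pedMap Ω R α β x₀ Δt ω σ)).rnDeriv volume x).toReal

theorem pedStep {Ω : Set E2} (hΩ : MeasurableSet Ω) (hΩbd : Bornology.IsBounded Ω)
    {R α β : ℝ} {x₀ : E2} {Δt : ℝ} (hΔt : 0 < Δt) {ω : ℝ → ℝ}
    (hωmono : ∀ s t : ℝ, 0 ≤ s → s ≤ t → ω t ≤ ω s)
    {K : ℝ} (hK0 : 0 ≤ K) (hKΔt : Δt * K < 1)
    {σ : E2 → ℝ} (hσint : IntegrableOn σ Ω) (hσtop : MemLp σ ⊤ (volume.restrict Ω))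
    (hσpos : 0 ≤ᵐ[volume.restrict Ω] σ)
    (hmapsσ : ∀ x ∈ Ω, x + Δt • pedVel Ω R α β x₀ ω σ x ∈ Ω)
    (hlipσ : ∀ x ∈ Ω, ∀ y ∈ Ω,
      ‖pedVel Ω R α β x₀ ω σ x - pedVel Ω R α β x₀ ω σ y‖ ≤ K * ‖x - y‖) :
    IntegrableOn (pedNext Ω R α β x₀ Δt ω σ) Ω ∧
    MemLp (pedNext Ω R α β x₀ Δt ω σ) ⊤ (volume.restrict Ω) ∧
    (∀ x, 0 ≤ pedNext Ω R α β x₀ Δt ω σ x) ∧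
    (pedDen Ω σ).map (pedMap Ω R α β x₀ Δt ω σ) ≪ volume ∧
    (pedDen Ω σ).map (pedMap Ω R α β x₀ Δt ω σ)
      = pedDen Ω (pedNext Ω R α β x₀ Δt ω σ) ∧
    ∀ η : E2 → ℝ, Measurable η → (∃ B, ∀ x, |η x| ≤ B) →
      ∫ x in Ω, η x * pedNext Ω R α β x₀ Δt ω σ x
        = ∫ x in Ω, η (pedMap Ω R α β x₀ Δt ω σ x) * σ x := by
  classical
  haveI hfinν : IsFiniteMeasure (volume.restrict Ω) :=
    ⟨by rw [Measure.restrict_apply_univ]; exact hΩbd.measure_lt_top⟩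
  have hVm : Measurable (pedVel Ω R α β x₀ ω σ) :=
    pedVel_measurable R α β x₀ hωmono hσint.aestronglyMeasurable hσpos
  have hΓm : Measurable (pedMap Ω R α β x₀ Δt ω σ) := by
    unfold pedMap
    exact measurable_id.add (hVm.const_smul Δt)
  set V := pedVel Ω R α β x₀ ω σ with hV_def
  set Γ := pedMap Ω R α β x₀ Δt ω σ with hΓ_def
  have hΓeq : ∀ x, Γ x = x + Δt • V x := fun x => rfl
  set μ := pedDen Ω σ with hμ_def
  have hμac : μ ≪ volume.restrict Ω := withDensity_absolutelyContinuous _ _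
  have hμΩ : ∀ᵐ x ∂μ, x ∈ Ω :=
    Filter.Eventually.filter_mono hμac.ae_le (ae_restrict_mem hΩ)
  haveI hμfin : IsFiniteMeasure μ := by
    constructor
    rw [hμ_def]
    unfold pedDen
    rw [withDensity_apply _ MeasurableSet.univ, setLIntegral_univ]
    exact hσint.lintegral_lt_top
  set μ' := μ.map Γ with hμ'_def
  haveI hμ'fin : IsFiniteMeasure μ' :=
    ⟨by rw [hμ'_def, Measure.map_apply hΓm MeasurableSet.univ]; exact measure_lt_top μ _⟩
  -- essential bound for σ
  set B := eLpNorm σ ⊤ (volume.restrict Ω) with hB_def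
  have hBne : B ≠ ⊤ := hσtop.2.ne
  have hσleB : ∀ᵐ x ∂(volume.restrict Ω), ENNReal.ofReal (σ x) ≤ B := by
    filter_upwards [ae_le_eLpNormEssSup (f := σ) (μ := volume.restrict Ω)] with x hx
    calc ENNReal.ofReal (σ x) ≤ ENNReal.ofReal |σ x| :=
          ENNReal.ofReal_le_ofReal (le_abs_self _)
      _ = (‖σ x‖₊ : ℝ≥0∞) := (Real.enorm_eq_ofReal_abs _).symm
      _ ≤ B := by rw [hB_def, eLpNorm_exponent_top]; exact hx
  -- the motion mapping is expansive-below on Ω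
  have hc : 0 < 1 - Δt * K := by linarith
  have hexp : ∀ x ∈ Ω, ∀ y ∈ Ω, (1 - Δt * K) * ‖x - y‖ ≤ ‖Γ x - Γ y‖ := by
    intro x hx y hy
    have h1 : ‖V x - V y‖ ≤ K * ‖x - y‖ := hlipσ x hx y hy
    have h2 : Γ x - Γ y = (x - y) + Δt • (V x - V y) := by
      rw [hΓeq x, hΓeq y, smul_sub]
      abel
    have h3 : ‖x - y‖ ≤ ‖Γ x - Γ y‖ + ‖Δt • (V x - V y)‖ := by
      calc ‖x - y‖ = ‖(Γ x - Γ y) - Δt • (V x - V y)‖ := by rw [h2]; congr 1; abel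
        _ ≤ _ := norm_sub_le _ _
    have h4 : ‖Δt • (V x - V y)‖ = Δt * ‖V x - V y‖ := by
      rw [norm_smul, Real.norm_eq_abs, abs_of_pos hΔt]
    nlinarith [norm_nonneg (x - y)]
  have hinj : Set.InjOn Γ Ω := by
    intro x hx y hy hxy
    have h1 := hexp x hx y hy
    rw [hxy, sub_self, norm_zero] at h1
    have h2 : ‖x - y‖ = 0 := by nlinarith [norm_nonneg (x - y)]
    exact sub_eq_zero.mp (norm_eq_zero.mp h2)
  set f := Function.invFunOn Γ Ω with hf_def
  have hfmem : ∀ u ∈ Γ '' Ω, f u ∈ Ω := by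
    rintro u ⟨a, ha, rfl⟩
    exact Function.invFunOn_mem (f := Γ) (s := Ω) ⟨a, ha, rfl⟩
  have hfeq : ∀ u ∈ Γ '' Ω, Γ (f u) = u := by
    rintro u ⟨a, ha, rfl⟩
    exact Function.invFunOn_eq (f := Γ) (s := Ω) ⟨a, ha, rfl⟩
  have hfleft : ∀ x ∈ Ω, f (Γ x) = x := fun x hx => hinj.leftInvOn_invFunOn hx
  have hfLip : LipschitzOnWith (1 - Δt * K)⁻¹.toNNReal f (Γ '' Ω) := by
    rw [lipschitzOnWith_iff_dist_le_mul]
    intro u hu v hv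
    have h1 := hexp (f u) (hfmem u hu) (f v) (hfmem v hv)
    rw [hfeq u hu, hfeq v hv] at h1
    rw [dist_eq_norm, dist_eq_norm, Real.coe_toNNReal _ (inv_nonneg.mpr hc.le)]
    calc ‖f u - f v‖ = (1 - Δt * K)⁻¹ * ((1 - Δt * K) * ‖f u - f v‖) := by
          field_simp
      _ ≤ (1 - Δt * K)⁻¹ * ‖u - v‖ :=
          mul_le_mul_of_nonneg_left h1 (inv_nonneg.mpr hc.le)
  obtain ⟨CL, hCLne, hCL⟩ := aux_lip_image hfLip
  set C := B * CL with hC_def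
  have hCne : C ≠ ⊤ := ENNReal.mul_ne_top hBne hCLne
  have hμ'le : ∀ A : Set E2, MeasurableSet A → μ' A ≤ C * volume A := by
    intro A hA
    rw [hμ'_def, Measure.map_apply hΓm hA, hμ_def]
    show pedDen Ω σ (Γ ⁻¹' A) ≤ _
    unfold pedDen
    rw [withDensity_apply _ (hΓm hA)]
    calc ∫⁻ x in Γ ⁻¹' A, ENNReal.ofReal (σ x) ∂(volume.restrict Ω)
        ≤ ∫⁻ _x in Γ ⁻¹' A, B ∂(volume.restrict Ω) :=
          lintegral_mono_ae (ae_restrict_of_ae hσleB)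
      _ = B * (volume.restrict Ω) (Γ ⁻¹' A) := setLIntegral_const _ _
      _ = B * volume (Γ ⁻¹' A ∩ Ω) := by rw [Measure.restrict_apply (hΓm hA)]
      _ ≤ B * volume (f '' (A ∩ Γ '' Ω)) := by
          refine mul_le_mul_right (measure_mono ?_) _
          rintro x ⟨hxA, hxΩ⟩
          exact ⟨Γ x, ⟨hxA, ⟨x, hxΩ, rfl⟩⟩, hfleft x hxΩ⟩
      _ ≤ B * (CL * volume (A ∩ Γ '' Ω)) :=
          mul_le_mul_right (hCL _ Set.inter_subset_right) _
      _ ≤ C * volume A := by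
          rw [hC_def, mul_assoc]
          exact mul_le_mul_right
            (mul_le_mul_right (measure_mono Set.inter_subset_left) _) _
  have hac : μ' ≪ volume := by
    refine Measure.AbsolutelyContinuous.mk fun A hA h0 => ?_
    have h1 := hμ'le A hA
    rw [h0, mul_zero] at h1
    exact le_antisymm h1 zero_le
  have hhm : Measurable (μ'.rnDeriv volume) := Measure.measurable_rnDeriv _ _
  have hhle : μ'.rnDeriv volume ≤ᵐ[volume] fun _ => C := by
    apply ae_le_of_forall_setLIntegral_le_of_sigmaFinite hhm
    intro s hs _
    rw [Measure.setLIntegral_rnDeriv hac]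
    calc μ' s ≤ C * volume s := hμ'le s hs
      _ = ∫⁻ _x in s, C ∂volume := (setLIntegral_const _ _).symm
  set τ := pedNext Ω R α β x₀ Δt ω σ with hτ_def
  have hτeq : ∀ x, τ x = (μ'.rnDeriv volume x).toReal := fun x => rfl
  have hτm : Measurable τ := by
    have : τ = fun x => (μ'.rnDeriv volume x).toReal := funext hτeq
    rw [this]
    exact hhm.ennreal_toReal
  have hτ0 : ∀ x, 0 ≤ τ x := fun x => ENNReal.toReal_nonneg
  have hτbd : ∀ᵐ x ∂volume, ‖τ x‖ ≤ C.toReal := by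
    filter_upwards [hhle] with x hx
    rw [hτeq x, Real.norm_eq_abs, abs_of_nonneg ENNReal.toReal_nonneg]
    exact ENNReal.toReal_mono hCne hx
  have hτtop : MemLp τ ⊤ (volume.restrict Ω) :=
    memLp_top_of_bound hτm.aestronglyMeasurable C.toReal (ae_restrict_of_ae hτbd)
  have hτint : IntegrableOn τ Ω := hτtop.integrable le_top
  have hμ'Ω : ∀ᵐ x ∂μ', x ∈ Ω := by
    rw [hμ'_def]
    refine (MeasureTheory.ae_map_iff hΓm.aemeasurable ?_).mpr ?_
    · exact hΩ
    · filter_upwards [hμΩ] with x hx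
      exact hmapsσ x hx
  have hid : μ' = pedDen Ω τ := by
    have h1 : volume.withDensity (μ'.rnDeriv volume) = μ' :=
      Measure.withDensity_rnDeriv_eq _ _ hac
    have h2 : (fun x => ENNReal.ofReal (τ x)) =ᵐ[volume] μ'.rnDeriv volume := by
      filter_upwards [Measure.rnDeriv_lt_top μ' volume] with x hx
      rw [hτeq x]
      exact ENNReal.ofReal_toReal hx.ne
    calc μ' = μ'.restrict Ω := (Measure.restrict_eq_self_of_ae_mem hμ'Ω).symm
      _ = (volume.withDensity (μ'.rnDeriv volume)).restrict Ω := by rw [h1]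
      _ = (volume.restrict Ω).withDensity (μ'.rnDeriv volume) :=
          restrict_withDensity hΩ _
      _ = (volume.restrict Ω).withDensity (fun x => ENNReal.ofReal (τ x)) :=
          (withDensity_congr_ae (ae_restrict_of_ae h2)).symm
      _ = pedDen Ω τ := rfl
  have hweak : ∀ η : E2 → ℝ, Measurable η → (∃ B', ∀ x, |η x| ≤ B') →
      ∫ x in Ω, η x * τ x = ∫ x in Ω, η (Γ x) * σ x := by
    intro η hηm _
    have e1 : ∫ x, η x ∂μ' = ∫ x in Ω, η x * τ x := by
      rw [hid]
      unfold pedDen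
      have hcoe : (fun x => ENNReal.ofReal (τ x))
          = fun x => ((fun x => (τ x).toNNReal) x : ℝ≥0∞) := rfl
      rw [hcoe, integral_withDensity_eq_integral_smul
        (f := fun x => (τ x).toNNReal) (by exact measurable_real_toNNReal.comp hτm) η]
      apply integral_congr_ae
      apply Filter.Eventually.of_forall
      intro x
      simp only [NNReal.smul_def, Real.coe_toNNReal _ (hτ0 x), smul_eq_mul]
      ring
    have e2 : ∫ x, η x ∂μ' = ∫ x, η (Γ x) ∂μ := by
      rw [hμ'_def]
      exact integral_map hΓm.aemeasurable hηm.aestronglyMeasurable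
    have e3 : ∫ x, η (Γ x) ∂μ = ∫ x in Ω, η (Γ x) * σ x := by
      rw [hμ_def]
      unfold pedDen
      have hcoe : (fun x => ENNReal.ofReal (σ x))
          = fun x => ((fun x => (σ x).toNNReal) x : ℝ≥0∞) := rfl
      rw [hcoe, integral_withDensity_eq_integral_smul₀
        (f := fun x => (σ x).toNNReal)
        (by exact measurable_real_toNNReal.comp_aemeasurable hσint.aemeasurable) _]
      apply integral_congr_ae
      filter_upwards [hσpos] with x hx
      simp only [NNReal.smul_def, Real.coe_toNNReal _ hx, smul_eq_mul]
      ring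
    rw [← e1, e2, e3]
  exact ⟨hτint, hτtop, hτ0, hac, hid, hweak⟩

theorem indicator_one_mul_integral {ν : Measure E2} {s : Set E2}
    (hs : MeasurableSet s) (g : E2 → ℝ) :
    ∫ x, s.indicator (fun _ => (1:ℝ)) x * g x ∂ν = ∫ x in s, g x ∂ν := by
  rw [← integral_indicator hs]
  congr 1
  funext x
  by_cases hx : x ∈ s <;> simp [hx]

/-- Well-posedness of the pedestrian flow model: starting from
`ρ₀ ∈ L¹(Ω) ∩ L^∞(Ω)`, `ρ₀ ≥ 0` a.e., with motion mappings
`γ n x = x + Δt • pedVel(ρ n) x` mapping `Ω` into `Ω` and `Δt·Lip(v_n) < 1`,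
there is a unique (up to a.e. equality) sequence of nonnegative densities
`ρ n ∈ L¹(Ω) ∩ L^∞(Ω)` with `∫ η ρ_{n+1} = ∫ (η∘γ_n) ρ_n` for all bounded Borel
`η`; the associated measures satisfy `μ_{n+1} = (γ_n)_# μ_n`, `dμ_n = ρ_n dx` and
`μ_n ≪ L²` for all `n`. -/
theorem stmt_19 (Ω : Set (EuclideanSpace ℝ (Fin 2))) (hΩ : MeasurableSet Ω)
    (hΩbd : Bornology.IsBounded Ω)
    (R α β : ℝ) (hR : 0 < R) (hα : 0 ≤ α) (hβ : 0 ≤ β)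
    (x₀ : EuclideanSpace ℝ (Fin 2)) (Δt : ℝ) (hΔt : 0 < Δt)
    (ω : ℝ → ℝ)
    (hωmono : ∀ s t : ℝ, 0 ≤ s → s ≤ t → ω t ≤ ω s)
    (hωpos : ∀ s : ℝ, 0 ≤ s → 0 ≤ ω s)
    (ρ₀ : EuclideanSpace ℝ (Fin 2) → ℝ)
    (hρ₀int : IntegrableOn ρ₀ Ω) (hρ₀infty : MemLp ρ₀ ⊤ (volume.restrict Ω))
    (hρ₀pos : 0 ≤ᵐ[volume.restrict Ω] ρ₀)
    (hmaps : ∀ σ : EuclideanSpace ℝ (Fin 2) → ℝ, IntegrableOn σ Ω →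
      0 ≤ᵐ[volume.restrict Ω] σ →
      ∀ x ∈ Ω, x + Δt • pedVel Ω R α β x₀ ω σ x ∈ Ω)
    (hΔtsmall : ∃ K : ℝ, 0 ≤ K ∧ Δt * K < 1 ∧
      ∀ σ : EuclideanSpace ℝ (Fin 2) → ℝ, IntegrableOn σ Ω →
        0 ≤ᵐ[volume.restrict Ω] σ →
        ∀ x ∈ Ω, ∀ y ∈ Ω,
          ‖pedVel Ω R α β x₀ ω σ x - pedVel Ω R α β x₀ ω σ y‖ ≤ K * ‖x - y‖) :
    ∃ ρ : ℕ → EuclideanSpace ℝ (Fin 2) → ℝ,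
      ρ 0 = ρ₀ ∧
      (∀ n, IntegrableOn (ρ n) Ω) ∧
      (∀ n, MemLp (ρ n) ⊤ (volume.restrict Ω)) ∧
      (∀ n, 0 ≤ᵐ[volume.restrict Ω] ρ n) ∧
      (∀ n, ∀ η : EuclideanSpace ℝ (Fin 2) → ℝ, Measurable η → (∃ K, ∀ x, |η x| ≤ K) →
        ∫ x in Ω, η x * ρ (n + 1) x
          = ∫ x in Ω, η (x + Δt • pedVel Ω R α β x₀ ω (ρ n) x) * ρ n x) ∧
      (∀ μ : ℕ → Measure (EuclideanSpace ℝ (Fin 2)),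
        μ 0 = (volume.restrict Ω).withDensity (fun x => ENNReal.ofReal (ρ₀ x)) →
        (∀ m, μ (m + 1)
          = (μ m).map (fun x => x + Δt • pedVel Ω R α β x₀ ω (ρ m) x)) →
        ∀ n, μ n ≪ volume ∧
          μ n = (volume.restrict Ω).withDensity (fun x => ENNReal.ofReal (ρ n x))) ∧
      (∀ ρ' : ℕ → EuclideanSpace ℝ (Fin 2) → ℝ,
        ρ' 0 = ρ₀ →
        (∀ n, IntegrableOn (ρ' n) Ω) →
        (∀ n, MemLp (ρ' n) ⊤ (volume.restrict Ω)) →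
        (∀ n, 0 ≤ᵐ[volume.restrict Ω] ρ' n) →
        (∀ n, ∀ η : EuclideanSpace ℝ (Fin 2) → ℝ, Measurable η →
          (∃ K, ∀ x, |η x| ≤ K) →
          ∫ x in Ω, η x * ρ' (n + 1) x
            = ∫ x in Ω, η (x + Δt • pedVel Ω R α β x₀ ω (ρ' n) x) * ρ' n x) →
        ∀ n, ρ' n =ᵐ[volume.restrict Ω] ρ n) := by
    classical
  obtain ⟨K, hK0, hKΔt, hKlip⟩ := hΔtsmall
  haveI hfinν : IsFiniteMeasure (volume.restrict Ω) :=
    ⟨by rw [Measure.restrict_apply_univ]; exact hΩbd.measure_lt_top⟩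
  set ρ : ℕ → EuclideanSpace ℝ (Fin 2) → ℝ :=
    fun n => (pedNext Ω R α β x₀ Δt ω)^[n] ρ₀ with hρ_def
  have hρ0 : ρ 0 = ρ₀ := rfl
  have hρsucc : ∀ n, ρ (n + 1) = pedNext Ω R α β x₀ Δt ω (ρ n) := fun n =>
    Function.iterate_succ_apply' _ _ _
  have hbasic : ∀ n, IntegrableOn (ρ n) Ω ∧ MemLp (ρ n) ⊤ (volume.restrict Ω) ∧
      0 ≤ᵐ[volume.restrict Ω] ρ n := by
    intro n
    induction n with
    | zero => exact ⟨hρ₀int, hρ₀infty, hρ₀pos⟩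
    | succ n ih =>
      obtain ⟨h1, h2, h3⟩ := ih
      have step := pedStep hΩ hΩbd hΔt hωmono hK0 hKΔt h1 h2 h3
        (hmaps _ h1 h3) (hKlip _ h1 h3)
      rw [hρsucc n]
      exact ⟨step.1, step.2.1, Filter.Eventually.of_forall step.2.2.1⟩
  have hstep : ∀ n, _ := fun n => pedStep hΩ hΩbd hΔt hωmono hK0 hKΔt
    (hbasic n).1 (hbasic n).2.1 (hbasic n).2.2
    (hmaps _ (hbasic n).1 (hbasic n).2.2) (hKlip _ (hbasic n).1 (hbasic n).2.2)
  have hweakAll : ∀ n, ∀ η : EuclideanSpace ℝ (Fin 2) → ℝ, Measurable η →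
      (∃ K', ∀ x, |η x| ≤ K') →
      ∫ x in Ω, η x * ρ (n + 1) x
        = ∫ x in Ω, η (x + Δt • pedVel Ω R α β x₀ ω (ρ n) x) * ρ n x := by
    intro n η hη hbd
    have h := (hstep n).2.2.2.2.2 η hη hbd
    rw [hρsucc n]
    exact h
  refine ⟨ρ, hρ0, fun n => (hbasic n).1, fun n => (hbasic n).2.1,
    fun n => (hbasic n).2.2, hweakAll, ?_, ?_⟩
  · -- measure clause
    intro μ hμ0 hμrec n
    induction n with
    | zero =>
      constructor
      · rw [hμ0]
        exact (withDensity_absolutelyContinuous _ _).trans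
          (Measure.absolutelyContinuous_of_le Measure.restrict_le_self)
      · rw [hμ0, hρ0]
    | succ n ih =>
      have heq : μ (n + 1) = (pedDen Ω (ρ n)).map (pedMap Ω R α β x₀ Δt ω (ρ n)) := by
        rw [hμrec n, ih.2]
        rfl
      refine ⟨heq ▸ (hstep n).2.2.2.1, ?_⟩
      rw [heq, (hstep n).2.2.2.2.1, hρsucc n]
      rfl
  · -- uniqueness clause
    intro ρ' h0 hint' hinf' hpos' hweak' n
    induction n with
    | zero => rw [h0, hρ0]
    | succ n ih =>
      have hped : pedVel Ω R α β x₀ ω (ρ' n) = pedVel Ω R α β x₀ ω (ρ n) :=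
        pedVel_congr R α β x₀ ω ih
      have key : ∀ s : Set (EuclideanSpace ℝ (Fin 2)), MeasurableSet s →
          ∫ x in s, ρ' (n + 1) x ∂(volume.restrict Ω)
            = ∫ x in s, ρ (n + 1) x ∂(volume.restrict Ω) := by
        intro s hs
        have hη : Measurable (s.indicator (fun _ => (1:ℝ))) :=
          measurable_const.indicator hs
        have hηbd : ∃ K', ∀ x, |s.indicator (fun _ => (1:ℝ)) x| ≤ K' := by
          refine ⟨1, fun x => ?_⟩
          by_cases hx : x ∈ s <;> simp [hx]
        have w1 := hweak' n _ hη hηbd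
        have w2 := hweakAll n _ hη hηbd
        have hrhs : ∫ x in Ω, (s.indicator (fun _ => (1:ℝ)))
              (x + Δt • pedVel Ω R α β x₀ ω (ρ' n) x) * ρ' n x
            = ∫ x in Ω, (s.indicator (fun _ => (1:ℝ)))
              (x + Δt • pedVel Ω R α β x₀ ω (ρ n) x) * ρ n x := by
          rw [hped]
          apply integral_congr_ae
          filter_upwards [ih] with x hx
          rw [hx]
        have hmain : ∫ x in Ω, (s.indicator (fun _ => (1:ℝ))) x * ρ' (n + 1) x
            = ∫ x in Ω, (s.indicator (fun _ => (1:ℝ))) x * ρ (n + 1) x := by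
          rw [w1, hrhs, ← w2]
        rw [indicator_one_mul_integral hs, indicator_one_mul_integral hs] at hmain
        exact hmain
      apply ae_eq_of_forall_setIntegral_eq_of_sigmaFinite
      · intro s hs _
        exact (hint' (n + 1)).integrableOn
      · intro s hs _
        exact ((hbasic (n + 1)).1).integrableOn
      · intro s hs _
        exact key s hs
end
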